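/- For every integer $m \geq 1$, $\int_0^{1-2^{-m}}\int_0^{1-2^{-m}} 2^{2m}(\alpha(m)\beta(m) - \alpha\beta)^2 \, d\alpha \, d\beta = -\frac{1}{72 \cdot 16^m}(2^m - 1)^2 (32 \cdot 2^m - 25 \cdot 4^m - 8)$, where $\alpha(m)$ denotes the smallest $m$-bit number (element of $\{k/2^m : k \in \mathbb{Z}\}$) greater than or equal to $\alpha$, and similarly for $\beta(m)$. -/

import Mathlib

open Finset

/-- Distance to the nearest integer. -/
noncomputable def dnn (x : ℝ) : ℝ := |x - round x|

/-- Real value of a bit. -/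
def bitr (b : Bool) : ℝ := if b then 1 else 0

/-- First coordinate of a Hammersley point: t_m/2 + ... + t_1/2^m. -/
noncomputable def hamX (m : ℕ) (t : Fin m → Bool) : ℝ :=
  ∑ j : Fin m, bitr (t j) / 2 ^ (m - j.val)

/-- Second coordinate of a shifted Hammersley point: s_1/2 + ... + s_m/2^m with s_j = t_j ⊕ σ_j. -/
noncomputable def hamY (m : ℕ) (σ t : Fin m → Bool) : ℝ :=
  ∑ j : Fin m, bitr (xor (t j) (σ j)) / 2 ^ (j.val + 1)

/-- Local discrepancy of the shifted Hammersley point set H_m(σ). -/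
noncomputable def Δham (m : ℕ) (σ : Fin m → Bool) (α β : ℝ) : ℝ :=
  ((Finset.univ.filter (fun t : Fin m → Bool => hamX m t < α ∧ hamY m σ t < β)).card : ℝ)
    - 2 ^ m * α * β

/-- digit i (1-based) of an m-digit vector, with value false outside 1..m. -/
def dig (m : ℕ) (a : Fin m → Bool) (i : ℕ) : Bool :=
  if h : 1 ≤ i ∧ i ≤ m then a ⟨i - 1, by omega⟩ else false

/-- The m-bit real number with binary digits a: ∑ a_j 2^{-j}. -/
noncomputable def mval (m : ℕ) (a : Fin m → Bool) : ℝ :=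
  ∑ j : Fin m, bitr (a j) / 2 ^ (j.val + 1)

/-- The index function j(u) associated with digits a of α, digits b of β, and shift τ. -/
def jfun (m : ℕ) (a b τ : Fin m → Bool) (u : ℕ) : ℕ :=
  Nat.findGreatest (fun j => dig m a (m + 1 - j) ≠ xor (dig m b j) (dig m τ j)) u

/-- Smallest m-bit number ≥ α. -/
noncomputable def upm (m : ℕ) (α : ℝ) : ℝ := (⌈2 ^ m * α⌉ : ℝ) / 2 ^ m

/-- Local discrepancy of the symmetrized Hammersley point set H_m(σ) ∪ H_m(σ*) (multiset union). -/
noncomputable def Δsym (m : ℕ) (σ : Fin m → Bool) (α β : ℝ) : ℝ :=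
  (((Finset.univ.filter (fun t : Fin m → Bool => hamX m t < α ∧ hamY m σ t < β)).card : ℝ)
    + ((Finset.univ.filter (fun t : Fin m → Bool =>
        hamX m t < α ∧ hamY m (fun j => !(σ j)) t < β)).card : ℝ))
    - 2 ^ (m + 1) * α * β


private lemma int_sq (c d a b : ℝ) :
    ∫ x in a..b, (c - d*x)^2
      = (c^2*b - c*d*b^2 + d^2*b^3/3) - (c^2*a - c*d*a^2 + d^2*a^3/3) := by
  have h : ∀ x : ℝ, HasDerivAt (fun y => c^2*y - c*d*y^2 + d^2*y^3/3) ((c - d*x)^2) x := by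
    intro x
    have h1 := (((hasDerivAt_id x).const_mul (c^2)).sub (((hasDerivAt_id x).pow 2).const_mul (c*d))).add ((((hasDerivAt_id x).pow 3).const_mul (d^2)).div_const 3)
    refine h1.congr_deriv ?_
    simp [id]; ring
  rw [intervalIntegral.integral_eq_sub_of_hasDerivAt (fun x _ => h x)
    (((continuous_const.sub (continuous_const.mul continuous_id)).pow 2).intervalIntegrable _ _)]

private lemma int_quad (A B C a b : ℝ) :
    ∫ x in a..b, (A + B*x + C*x^2)
      = (A*b + B*b^2/2 + C*b^3/3) - (A*a + B*a^2/2 + C*a^3/3) := by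
  have h : ∀ x : ℝ, HasDerivAt (fun y => A*y + B*y^2/2 + C*y^3/3) (A + B*x + C*x^2) x := by
    intro x
    have h1 := (((hasDerivAt_id x).const_mul A).add ((((hasDerivAt_id x).pow 2).const_mul B).div_const 2)).add ((((hasDerivAt_id x).pow 3).const_mul C).div_const 3)
    refine h1.congr_deriv ?_
    simp [id]; ring
  rw [intervalIntegral.integral_eq_sub_of_hasDerivAt (fun x _ => h x)
    ((((continuous_const).add (continuous_const.mul continuous_id)).add (continuous_const.mul (continuous_id.pow 2))).intervalIntegrable _ _)]

private lemma upm_cell (m k : ℕ) {x : ℝ} (h1 : (k:ℝ)/2^m < x) (h2 : x ≤ ((k:ℝ)+1)/2^m) :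
    upm m x = ((k:ℝ)+1)/2^m := by
  have hN : (0:ℝ) < 2^m := by positivity
  have hc : ⌈(2:ℝ)^m * x⌉ = (k:ℤ)+1 := by
    rw [Int.ceil_eq_iff]
    rw [div_lt_iff₀ hN] at h1
    rw [le_div_iff₀ hN] at h2
    constructor
    · push_cast; nlinarith
    · push_cast; nlinarith
  unfold upm
  rw [hc]
  push_cast
  ring


private lemma sum_c1 (n : ℕ) : ∑ i ∈ Finset.range n, ((i:ℝ)+1)^2 = (n:ℝ)*(n+1)*(2*n+1)/6 := by
  induction n with
  | zero => simp
  | succ n ih => rw [Finset.sum_range_succ, ih]; push_cast; ring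

private lemma sum_c2 (n : ℕ) : ∑ i ∈ Finset.range n, ((i:ℝ)+1)*(2*(i:ℝ)+1) = (n:ℝ)*(n+1)*(4*n-1)/6 := by
  induction n with
  | zero => simp
  | succ n ih => rw [Finset.sum_range_succ, ih]; push_cast; ring

private lemma sum_c3 (n : ℕ) : ∑ i ∈ Finset.range n, (3*(i:ℝ)^2+3*(i:ℝ)+1) = (n:ℝ)^3 := by
  induction n with
  | zero => simp
  | succ n ih => rw [Finset.sum_range_succ, ih]; push_cast; ring

private lemma lin_sum (s : Finset ℕ) (c1 c2 c3 x y z : ℝ) (P Q R : ℕ → ℝ) :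
    ∑ l ∈ s, (c1*(x*P l) - c2*(y*Q l) + c3*(z*R l))
      = c1*(x*∑ l ∈ s, P l) - c2*(y*∑ l ∈ s, Q l) + c3*(z*∑ l ∈ s, R l) := by
  simp [Finset.sum_sub_distrib, Finset.sum_add_distrib, Finset.mul_sum]

private lemma final_sum (m : ℕ) (hm : 1 ≤ m) :
    ∑ k ∈ Finset.range (2^m - 1), ∑ l ∈ Finset.range (2^m - 1),
      ((((k:ℝ)+1)^2*((l:ℝ)+1)^2 - ((k:ℝ)+1)*((l:ℝ)+1)*(2*(l:ℝ)+1)*(2*(k:ℝ)+1)/2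
        + (3*(l:ℝ)^2+3*(l:ℝ)+1)*(3*(k:ℝ)^2+3*(k:ℝ)+1)/9) / ((2:ℝ)^m)^4)
    = -(1 / (72 * 16 ^ m)) * ((2:ℝ)^m - 1)^2 * (32 * 2^m - 25 * (4:ℝ)^m - 8) := by
  have hN : (0:ℝ) < 2^m := by positivity
  set n : ℕ := 2^m - 1 with hn
  set c1 : ℝ := 1/((2:ℝ)^m)^4
  set c2 : ℝ := 1/(2*((2:ℝ)^m)^4)
  set c3 : ℝ := 1/(9*((2:ℝ)^m)^4)
  have e : ∀ k l : ℕ,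
      ((((k:ℝ)+1)^2*((l:ℝ)+1)^2 - ((k:ℝ)+1)*((l:ℝ)+1)*(2*(l:ℝ)+1)*(2*(k:ℝ)+1)/2
        + (3*(l:ℝ)^2+3*(l:ℝ)+1)*(3*(k:ℝ)^2+3*(k:ℝ)+1)/9) / ((2:ℝ)^m)^4)
      = c1*(((k:ℝ)+1)^2*(((l:ℝ)+1)^2)) - c2*((((k:ℝ)+1)*(2*(k:ℝ)+1))*(((l:ℝ)+1)*(2*(l:ℝ)+1)))
        + c3*((3*(k:ℝ)^2+3*(k:ℝ)+1)*(3*(l:ℝ)^2+3*(l:ℝ)+1)) := by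
    intro k l
    simp only [c1, c2, c3]
    field_simp
  calc ∑ k ∈ Finset.range n, ∑ l ∈ Finset.range n, _
      = ∑ k ∈ Finset.range n,
          (c1*(((k:ℝ)+1)^2*(∑ l ∈ Finset.range n, ((l:ℝ)+1)^2))
           - c2*((((k:ℝ)+1)*(2*(k:ℝ)+1))*(∑ l ∈ Finset.range n, ((l:ℝ)+1)*(2*(l:ℝ)+1)))
           + c3*((3*(k:ℝ)^2+3*(k:ℝ)+1)*(∑ l ∈ Finset.range n, (3*(l:ℝ)^2+3*(l:ℝ)+1)))) := by
        refine Finset.sum_congr rfl fun k _ => ?_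
        rw [Finset.sum_congr rfl fun l _ => e k l]
        exact lin_sum _ _ _ _ _ _ _ _ _ _
    _ = c1*((∑ l ∈ Finset.range n, ((l:ℝ)+1)^2)*(∑ l ∈ Finset.range n, ((l:ℝ)+1)^2))
        - c2*((∑ l ∈ Finset.range n, ((l:ℝ)+1)*(2*(l:ℝ)+1))*(∑ l ∈ Finset.range n, ((l:ℝ)+1)*(2*(l:ℝ)+1)))
        + c3*((∑ l ∈ Finset.range n, (3*(l:ℝ)^2+3*(l:ℝ)+1))*(∑ l ∈ Finset.range n, (3*(l:ℝ)^2+3*(l:ℝ)+1))) := by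
        rw [← lin_sum]
        refine Finset.sum_congr rfl fun k _ => ?_
        ring
    _ = _ := by
        rw [sum_c1, sum_c2, sum_c3]
        have hcast : ((n:ℝ)) = 2^m - 1 := by
          rw [hn, Nat.cast_sub Nat.one_le_two_pow]; push_cast; ring
        have h16 : (16:ℝ)^m = ((2:ℝ)^m)^4 := by
          rw [← pow_mul, show (16:ℝ) = 2^4 by norm_num, ← pow_mul, Nat.mul_comm]
        have h4 : (4:ℝ)^m = ((2:ℝ)^m)^2 := by
          rw [← pow_mul, show (4:ℝ) = 2^2 by norm_num, ← pow_mul, Nat.mul_comm]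
        rw [hcast, h16, h4]
        simp only [c1, c2, c3]
        field_simp
        ring

open intervalIntegral MeasureTheory in
theorem stmt15 (m : ℕ) (hm : 1 ≤ m) :
    (∫ α in (0:ℝ)..(1 - (2:ℝ)⁻¹ ^ m), ∫ β in (0:ℝ)..(1 - (2:ℝ)⁻¹ ^ m),
        (2 : ℝ) ^ (2 * m) * (upm m α * upm m β - α * β) ^ 2)
      = -(1 / (72 * 16 ^ m)) * ((2 : ℝ) ^ m - 1) ^ 2
          * (32 * 2 ^ m - 25 * 4 ^ m - 8) := by
  have hN : (0:ℝ) < 2^m := by positivity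
  have hN' : ((2:ℝ)^m) ≠ 0 := ne_of_gt hN
  set n : ℕ := 2^m - 1 with hn
  have hncast : ((n:ℝ)) = 2^m - 1 := by
    rw [hn, Nat.cast_sub Nat.one_le_two_pow]; push_cast; ring
  set a : ℕ → ℝ := fun k => (k:ℝ)/2^m with ha
  have ha0 : (0:ℝ) = a 0 := by simp [ha]
  have haend : (1 : ℝ) - (2:ℝ)⁻¹^m = a n := by
    simp only [ha, hncast]
    rw [inv_pow]
    field_simp
  have hale : ∀ k : ℕ, a k ≤ a (k+1) := by
    intro k
    simp only [ha]
    gcongr <;> push_cast <;> linarith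
  have h2m : (2:ℝ)^(2*m) = ((2:ℝ)^m)^2 := by rw [← pow_mul, Nat.mul_comm]
  have hupm : ∀ (k:ℕ) {x : ℝ}, x ∈ Set.Ioc (a k) (a (k+1)) → upm m x = ((k:ℝ)+1)/2^m := by
    intro k x hx
    refine upm_cell m k hx.1 ?_
    have := hx.2
    simp only [ha] at this
    push_cast at this
    exact this
  -- equality of integrand functions on each β-cell
  have hEq : ∀ (X x : ℝ) (l : ℕ), Set.EqOn (fun β => (X*((l:ℝ)+1) - ((2:ℝ)^m*x)*β)^2)
      (fun β => 2^(2*m)*(X * upm m β - x*β)^2) (Set.Ioc (a l) (a (l+1))) := by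
    intro X x l β hβ
    simp only
    rw [hupm l hβ, h2m]
    field_simp
  have cellInt : ∀ (X x : ℝ) (l:ℕ), IntervalIntegrable (fun β => 2^(2*m)*(X*upm m β - x*β)^2)
      volume (a l) (a (l+1)) := by
    intro X x l
    rw [intervalIntegrable_iff_integrableOn_Ioc_of_le (hale l)]
    exact ((by fun_prop : Continuous (fun β : ℝ => (X*((l:ℝ)+1) - ((2:ℝ)^m*x)*β)^2)).integrableOn_Ioc).congr_fun
      (hEq X x l) measurableSet_Ioc
  have cell : ∀ (X x : ℝ) (l:ℕ),
      (∫ β in a l..a (l+1), 2^(2*m)*(X * upm m β - x*β)^2)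
      = (X^2*((l:ℝ)+1)^2 - X*((l:ℝ)+1)*(2*(l:ℝ)+1)*x + x^2*(3*(l:ℝ)^2+3*(l:ℝ)+1)/3)/2^m := by
    intro X x l
    rw [intervalIntegral.integral_of_le (hale l),
      ← MeasureTheory.setIntegral_congr_fun measurableSet_Ioc (hEq X x l),
      ← intervalIntegral.integral_of_le (hale l), int_sq]
    simp only [ha]
    push_cast
    field_simp
    ring
  have inner : ∀ x : ℝ, (∫ β in (0:ℝ)..(1-(2:ℝ)⁻¹^m), 2^(2*m)*(upm m x * upm m β - x*β)^2)
      = ∑ l ∈ Finset.range n,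
        (((upm m x)^2*((l:ℝ)+1)^2 - (upm m x)*((l:ℝ)+1)*(2*(l:ℝ)+1)*x
          + x^2*(3*(l:ℝ)^2+3*(l:ℝ)+1)/3)/2^m) := by
    intro x
    rw [ha0, haend, ← intervalIntegral.sum_integral_adjacent_intervals
      (fun l _ => cellInt (upm m x) x l)]
    exact Finset.sum_congr rfl fun l _ => cell _ _ l
  rw [intervalIntegral.integral_congr (fun x _ => inner x)]
  -- outer integral
  set g : ℝ → ℝ → ℝ := fun X x => ∑ l ∈ Finset.range n,
      ((X^2*((l:ℝ)+1)^2 - X*((l:ℝ)+1)*(2*(l:ℝ)+1)*x + x^2*(3*(l:ℝ)^2+3*(l:ℝ)+1)/3)/2^m)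
      with hg
  have hgEq : ∀ (k : ℕ), Set.EqOn (fun x => g (((k:ℝ)+1)/2^m) x)
      (fun x => g (upm m x) x) (Set.Ioc (a k) (a (k+1))) := by
    intro k x hx
    simp only
    rw [hupm k hx]
  have hgcont : ∀ X : ℝ, Continuous (fun x => g X x) := by
    intro X
    apply continuous_finset_sum
    intro l _
    fun_prop
  have outInt : ∀ k:ℕ, IntervalIntegrable (fun x => g (upm m x) x) volume (a k) (a (k+1)) := by
    intro k
    rw [intervalIntegrable_iff_integrableOn_Ioc_of_le (hale k)]
    exact ((hgcont (((k:ℝ)+1)/2^m)).integrableOn_Ioc).congr_fun (hgEq k) measurableSet_Ioc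
  rw [ha0, haend, ← intervalIntegral.sum_integral_adjacent_intervals (fun k _ => outInt k)]
  have outCell : ∀ k : ℕ, (∫ x in a k..a (k+1), g (upm m x) x)
      = ∑ l ∈ Finset.range n,
        ((((k:ℝ)+1)^2*((l:ℝ)+1)^2 - ((k:ℝ)+1)*((l:ℝ)+1)*(2*(l:ℝ)+1)*(2*(k:ℝ)+1)/2
          + (3*(l:ℝ)^2+3*(l:ℝ)+1)*(3*(k:ℝ)^2+3*(k:ℝ)+1)/9) / ((2:ℝ)^m)^4) := by
    intro k
    rw [intervalIntegral.integral_of_le (hale k),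
      ← MeasureTheory.setIntegral_congr_fun measurableSet_Ioc (hgEq k),
      ← intervalIntegral.integral_of_le (hale k)]
    simp only [hg]
    rw [intervalIntegral.integral_finset_sum (fun (l : ℕ) _ => ((by fun_prop : Continuous
      (fun x : ℝ => (((((k:ℝ)+1)/2^m)^2*((l:ℝ)+1)^2 - (((k:ℝ)+1)/2^m)*((l:ℝ)+1)*(2*(l:ℝ)+1)*x
        + x^2*(3*(l:ℝ)^2+3*(l:ℝ)+1)/3)/2^m))).intervalIntegrable _ _))]
    refine Finset.sum_congr rfl fun l _ => ?_
    have : ∀ x : ℝ, (((((k:ℝ)+1)/2^m)^2*((l:ℝ)+1)^2 - (((k:ℝ)+1)/2^m)*((l:ℝ)+1)*(2*(l:ℝ)+1)*x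
        + x^2*(3*(l:ℝ)^2+3*(l:ℝ)+1)/3)/2^m)
        = ((((k:ℝ)+1)/2^m)^2*((l:ℝ)+1)^2/2^m) + (-((((k:ℝ)+1)/2^m)*((l:ℝ)+1)*(2*(l:ℝ)+1)/2^m))*x
          + ((3*(l:ℝ)^2+3*(l:ℝ)+1)/(3*2^m))*x^2 := by
      intro x; field_simp; ring
    rw [intervalIntegral.integral_congr (fun x _ => this x), int_quad]
    simp only [ha]
    push_cast
    field_simp
    ring
  rw [Finset.sum_congr rfl fun k _ => outCell k]
  exact final_sum m hm
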